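/- Consider the index-2 Stokes-type DAE with E₁₁ ∈ ℂ^{n₁×n₁} invertible, A₁₁ ∈ ℂ^{n₁×n₁}, A₂₁ ∈ ℂ^{n₂×n₁} such that A₂₁ E₁₁^{-1} A₂₁ᵀ is invertible, B₁ ∈ ℂ^{n₁×m}, C₁ ∈ ℂ^{p×n₁}, D ∈ ℂ^{p×m}, transfer function G(s) = ℭ(s𝔼 − 𝔸)^{-1}𝔹 + D where 𝔼 = diag(E₁₁, 0), 𝔸 = [[A₁₁, A₂₁ᵀ],[A₂₁, 0]], 𝔹 = [B₁; 0], ℭ = [C₁, 0]. Let σ₁,…,σ_r ∈ ℂ, b₁,…,b_r ∈ ℂ^m, c₁,…,c_r ∈ ℂ^p, assume for each i the matrices [[σᵢE₁₁ − A₁₁, A₂₁ᵀ],[A₂₁, 0]] and [[σᵢE₁₁ᵀ − A₁₁ᵀ, A₂₁ᵀ],[A₂₁, 0]] are invertible, and let (vᵢ, zᵢ) and (wᵢ, qᵢ) solve [[σᵢE₁₁ − A₁₁, A₂₁ᵀ],[A₂₁, 0]][vᵢ; zᵢ] = [B₁ bᵢ; 0] and [[σᵢE₁₁ᵀ − A₁₁ᵀ,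 A₂₁ᵀ],[A₂₁, 0]][wᵢ; qᵢ] = [C₁ᵀ cᵢ; 0]. Set V = [v₁,…,v_r], W = [w₁,…,w_r] and G̃(s) = C₁V (s Wᵀ E₁₁ V − Wᵀ A₁₁ V)^{-1} Wᵀ B₁ + D. Then for each j such that σⱼ Wᵀ E₁₁ V − Wᵀ A₁₁ V is invertible, the left tangential interpolation condition cⱼᵀ G(σⱼ) = cⱼᵀ G̃(σⱼ) holds. -/

import Mathlib

open Matrix

/-- Interpolatory model reduction for index-2 Stokes-type DAEs without spectral
projectors (left tangential condition).  The bases `V` and `W` are built from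
solutions of the saddle-point systems; the reduced model interpolates `G` from
the left at each interpolation point. -/
theorem index2_left_tangential_interpolation
    (n₁ n₂ m p r : ℕ)
    (E₁₁ A₁₁ : Matrix (Fin n₁) (Fin n₁) ℂ)
    (A₂₁ : Matrix (Fin n₂) (Fin n₁) ℂ)
    (B₁ : Matrix (Fin n₁) (Fin m) ℂ)
    (C₁ : Matrix (Fin p) (Fin n₁) ℂ)
    (D : Matrix (Fin p) (Fin m) ℂ)
    (hE : IsUnit E₁₁)
    (hSchur : IsUnit (A₂₁ * E₁₁⁻¹ * A₂₁ᵀ))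
    (σ : Fin r → ℂ) (b : Fin r → Fin m → ℂ) (c : Fin r → Fin p → ℂ)
    (v w : Fin r → Fin n₁ → ℂ) (z q : Fin r → Fin n₂ → ℂ)
    (hsadV : ∀ i, IsUnit (fromBlocks (σ i • E₁₁ - A₁₁) A₂₁ᵀ A₂₁ 0))
    (hsadW : ∀ i, IsUnit (fromBlocks (σ i • E₁₁ᵀ - A₁₁ᵀ) A₂₁ᵀ A₂₁ 0))
    (hv : ∀ i, (fromBlocks (σ i • E₁₁ - A₁₁) A₂₁ᵀ A₂₁ 0).mulVec
        (Sum.elim (v i) (z i)) = Sum.elim (B₁.mulVec (b i)) 0)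
    (hw : ∀ i, (fromBlocks (σ i • E₁₁ᵀ - A₁₁ᵀ) A₂₁ᵀ A₂₁ 0).mulVec
        (Sum.elim (w i) (q i)) = Sum.elim (C₁ᵀ.mulVec (c i)) 0)
    (V W : Matrix (Fin n₁) (Fin r) ℂ)
    (hV : V = (Matrix.of v)ᵀ)
    (hW : W = (Matrix.of w)ᵀ)
    (j : Fin r)
    (hred : IsUnit (σ j • (Wᵀ * E₁₁ * V) - Wᵀ * A₁₁ * V)) :
    Matrix.vecMul (c j)
        (fromCols C₁ (0 : Matrix (Fin p) (Fin n₂) ℂ)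
          * (σ j • fromBlocks E₁₁ 0 0 0 - fromBlocks A₁₁ A₂₁ᵀ A₂₁ 0)⁻¹
          * fromRows B₁ (0 : Matrix (Fin n₂) (Fin m) ℂ) + D)
      = Matrix.vecMul (c j)
          (C₁ * V * (σ j • (Wᵀ * E₁₁ * V) - Wᵀ * A₁₁ * V)⁻¹ * (Wᵀ * B₁) + D) := by
  -- extract block equations from the saddle-point systems
  have hvbot : ∀ i, A₂₁ *ᵥ v i = 0 := by
    intro i
    have h := hv i
    rw [fromBlocks_mulVec] at h
    have h2 := congrArg (fun f => f ∘ Sum.inr) h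
    simpa using h2
  have hwj := hw j
  rw [fromBlocks_mulVec] at hwj
  have hwtop : (σ j • E₁₁ᵀ - A₁₁ᵀ) *ᵥ w j + A₂₁ᵀ *ᵥ q j = C₁ᵀ *ᵥ c j := by
    have h2 := congrArg (fun f => f ∘ Sum.inl) hwj
    simpa using h2
  have hwbot : A₂₁ *ᵥ w j = 0 := by
    have h2 := congrArg (fun f => f ∘ Sum.inr) hwj
    simpa using h2
  have hXt : σ j • E₁₁ᵀ - A₁₁ᵀ = (σ j • E₁₁ - A₁₁)ᵀ := by
    rw [transpose_sub, transpose_smul]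
  have hc : c j ᵥ* C₁ = w j ᵥ* (σ j • E₁₁ - A₁₁) + q j ᵥ* A₂₁ := by
    rw [← mulVec_transpose C₁, ← hwtop, hXt, mulVec_transpose, mulVec_transpose]
  -- the big pencil in block form
  have hMblocks : σ j • fromBlocks E₁₁ 0 0 0 - fromBlocks A₁₁ A₂₁ᵀ A₂₁ 0
      = fromBlocks (σ j • E₁₁ - A₁₁) (-A₂₁ᵀ) (-A₂₁) (0 : Matrix (Fin n₂) (Fin n₂) ℂ) := by
    rw [fromBlocks_smul, sub_eq_add_neg, fromBlocks_neg, fromBlocks_add]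
    congr 1 <;> simp [sub_eq_add_neg]
  have hSS : (fromBlocks 1 0 0 (-1) :
      Matrix (Fin n₁ ⊕ Fin n₂) (Fin n₁ ⊕ Fin n₂) ℂ) * fromBlocks 1 0 0 (-1) = 1 := by
    rw [fromBlocks_multiply]
    simp only [Matrix.mul_one, Matrix.mul_zero, Matrix.zero_mul, add_zero, zero_add,
      Matrix.neg_mul, Matrix.mul_neg, neg_neg, neg_zero, Matrix.one_mul]
    exact fromBlocks_one
  have hSunit : IsUnit (fromBlocks 1 0 0 (-1) :
      Matrix (Fin n₁ ⊕ Fin n₂) (Fin n₁ ⊕ Fin n₂) ℂ) :=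
    ⟨⟨_, _, hSS, hSS⟩, rfl⟩
  have hMunit : IsUnit (σ j • fromBlocks E₁₁ 0 0 0 - fromBlocks A₁₁ A₂₁ᵀ A₂₁ 0) := by
    rw [hMblocks]
    have hdecomp : fromBlocks (σ j • E₁₁ - A₁₁) (-A₂₁ᵀ) (-A₂₁)
          (0 : Matrix (Fin n₂) (Fin n₂) ℂ)
        = fromBlocks 1 0 0 (-1) * fromBlocks (σ j • E₁₁ - A₁₁) A₂₁ᵀ A₂₁ 0
            * fromBlocks 1 0 0 (-1) := by
      rw [fromBlocks_multiply, fromBlocks_multiply]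
      simp
    rw [hdecomp]
    exact (hSunit.mul (hsadV j)).mul hSunit
  have hMinv : (σ j • fromBlocks E₁₁ 0 0 0 - fromBlocks A₁₁ A₂₁ᵀ A₂₁ 0)
      * (σ j • fromBlocks E₁₁ 0 0 0 - fromBlocks A₁₁ A₂₁ᵀ A₂₁ 0)⁻¹ = 1 :=
    Matrix.mul_nonsing_inv _ ((Matrix.isUnit_iff_isUnit_det _).mp hMunit)
  -- key left vector identity for the big system
  have hkey : Sum.elim (w j) (-(q j))
      ᵥ* (σ j • fromBlocks E₁₁ 0 0 0 - fromBlocks A₁₁ A₂₁ᵀ A₂₁ 0)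
      = Sum.elim (c j ᵥ* C₁) 0 := by
    rw [hMblocks, vecMul_fromBlocks]
    have htop : w j ᵥ* (σ j • E₁₁ - A₁₁) + (-(q j)) ᵥ* (-A₂₁) = c j ᵥ* C₁ := by
      rw [neg_vecMul, vecMul_neg, neg_neg]
      exact hc.symm
    have hbot : w j ᵥ* (-A₂₁ᵀ) + (-(q j)) ᵥ* (0 : Matrix (Fin n₂) (Fin n₂) ℂ)
        = (0 : Fin n₂ → ℂ) := by
      rw [vecMul_neg, vecMul_transpose, hwbot, neg_zero, vecMul_zero, add_zero]
    simp only [Sum.elim_comp_inl, Sum.elim_comp_inr]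
    rw [htop, hbot]
  -- left-hand side transfer function evaluation
  have hLHS : c j ᵥ* (fromCols C₁ (0 : Matrix (Fin p) (Fin n₂) ℂ)
      * (σ j • fromBlocks E₁₁ 0 0 0 - fromBlocks A₁₁ A₂₁ᵀ A₂₁ 0)⁻¹
      * fromRows B₁ (0 : Matrix (Fin n₂) (Fin m) ℂ)) = w j ᵥ* B₁ := by
    have h2 : Sum.elim (c j ᵥ* C₁) (0 : Fin n₂ → ℂ)
        ᵥ* (σ j • fromBlocks E₁₁ 0 0 0 - fromBlocks A₁₁ A₂₁ᵀ A₂₁ 0)⁻¹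
        = Sum.elim (w j) (-(q j)) := by
      rw [← hkey, vecMul_vecMul, hMinv, vecMul_one]
    calc c j ᵥ* (fromCols C₁ (0 : Matrix (Fin p) (Fin n₂) ℂ)
          * (σ j • fromBlocks E₁₁ 0 0 0 - fromBlocks A₁₁ A₂₁ᵀ A₂₁ 0)⁻¹
          * fromRows B₁ (0 : Matrix (Fin n₂) (Fin m) ℂ))
        = c j ᵥ* fromCols C₁ (0 : Matrix (Fin p) (Fin n₂) ℂ)
            ᵥ* (σ j • fromBlocks E₁₁ 0 0 0 - fromBlocks A₁₁ A₂₁ᵀ A₂₁ 0)⁻¹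
            ᵥ* fromRows B₁ 0 := by
          rw [vecMul_vecMul, vecMul_vecMul, ← Matrix.mul_assoc]
      _ = Sum.elim (c j ᵥ* C₁) 0
            ᵥ* (σ j • fromBlocks E₁₁ 0 0 0 - fromBlocks A₁₁ A₂₁ᵀ A₂₁ 0)⁻¹
            ᵥ* fromRows B₁ 0 := by
          rw [vecMul_fromCols, vecMul_zero]
      _ = Sum.elim (w j) (-(q j)) ᵥ* fromRows B₁ 0 := by rw [h2]
      _ = w j ᵥ* B₁ := by rw [sumElim_vecMul_fromRows, vecMul_zero, add_zero]
  -- reduced model side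
  subst hV hW
  have hA21V : A₂₁ * (Matrix.of v)ᵀ = 0 := by
    ext k i
    have h := congrFun (hvbot i) k
    simpa [mul_apply, mulVec, dotProduct] using h
  have hR : σ j • (((Matrix.of w)ᵀ)ᵀ * E₁₁ * (Matrix.of v)ᵀ)
      - ((Matrix.of w)ᵀ)ᵀ * A₁₁ * (Matrix.of v)ᵀ
      = ((Matrix.of w)ᵀ)ᵀ * (σ j • E₁₁ - A₁₁) * (Matrix.of v)ᵀ := by
    rw [Matrix.mul_sub, Matrix.sub_mul, Matrix.mul_smul, Matrix.smul_mul]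
  have hRinv : (σ j • (((Matrix.of w)ᵀ)ᵀ * E₁₁ * (Matrix.of v)ᵀ)
        - ((Matrix.of w)ᵀ)ᵀ * A₁₁ * (Matrix.of v)ᵀ)
      * (σ j • (((Matrix.of w)ᵀ)ᵀ * E₁₁ * (Matrix.of v)ᵀ)
        - ((Matrix.of w)ᵀ)ᵀ * A₁₁ * (Matrix.of v)ᵀ)⁻¹ = 1 :=
    Matrix.mul_nonsing_inv _ ((Matrix.isUnit_iff_isUnit_det _).mp hred)
  have hWrow : Pi.single j 1 ᵥ* ((Matrix.of w)ᵀ)ᵀ = w j := by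
    rw [single_one_vecMul, transpose_transpose]
    rfl
  -- the crucial row identity : c j ᵥ* (C₁ V) is the j-th row of the reduced pencil
  have hrow : c j ᵥ* (C₁ * (Matrix.of v)ᵀ)
      = Pi.single j 1 ᵥ* (σ j • (((Matrix.of w)ᵀ)ᵀ * E₁₁ * (Matrix.of v)ᵀ)
          - ((Matrix.of w)ᵀ)ᵀ * A₁₁ * (Matrix.of v)ᵀ) := by
    calc c j ᵥ* (C₁ * (Matrix.of v)ᵀ)
        = (c j ᵥ* C₁) ᵥ* (Matrix.of v)ᵀ := (vecMul_vecMul _ _ _).symm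
      _ = (w j ᵥ* (σ j • E₁₁ - A₁₁) + q j ᵥ* A₂₁) ᵥ* (Matrix.of v)ᵀ := by rw [hc]
      _ = w j ᵥ* ((σ j • E₁₁ - A₁₁) * (Matrix.of v)ᵀ)
            + q j ᵥ* (A₂₁ * (Matrix.of v)ᵀ) := by
          rw [add_vecMul, vecMul_vecMul, vecMul_vecMul]
      _ = w j ᵥ* ((σ j • E₁₁ - A₁₁) * (Matrix.of v)ᵀ) := by
          rw [hA21V, vecMul_zero, add_zero]
      _ = Pi.single j 1
            ᵥ* (((Matrix.of w)ᵀ)ᵀ * ((σ j • E₁₁ - A₁₁) * (Matrix.of v)ᵀ)) := by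
          conv_rhs => rw [← vecMul_vecMul, hWrow]
      _ = Pi.single j 1 ᵥ* (σ j • (((Matrix.of w)ᵀ)ᵀ * E₁₁ * (Matrix.of v)ᵀ)
            - ((Matrix.of w)ᵀ)ᵀ * A₁₁ * (Matrix.of v)ᵀ) := by
          rw [hR, Matrix.mul_assoc]
  have hlast : Pi.single j 1 ᵥ* (((Matrix.of w)ᵀ)ᵀ * B₁) = w j ᵥ* B₁ := by
    rw [single_one_vecMul]
    ext i
    simp [mul_apply, vecMul, dotProduct]
  -- right-hand side reduced transfer function evaluation
  have hRHS : c j ᵥ* (C₁ * (Matrix.of v)ᵀ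
      * (σ j • (((Matrix.of w)ᵀ)ᵀ * E₁₁ * (Matrix.of v)ᵀ)
          - ((Matrix.of w)ᵀ)ᵀ * A₁₁ * (Matrix.of v)ᵀ)⁻¹
      * (((Matrix.of w)ᵀ)ᵀ * B₁)) = w j ᵥ* B₁ := by
    calc c j ᵥ* (C₁ * (Matrix.of v)ᵀ
          * (σ j • (((Matrix.of w)ᵀ)ᵀ * E₁₁ * (Matrix.of v)ᵀ)
              - ((Matrix.of w)ᵀ)ᵀ * A₁₁ * (Matrix.of v)ᵀ)⁻¹
          * (((Matrix.of w)ᵀ)ᵀ * B₁))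
        = c j ᵥ* (C₁ * (Matrix.of v)ᵀ)
            ᵥ* (σ j • (((Matrix.of w)ᵀ)ᵀ * E₁₁ * (Matrix.of v)ᵀ)
              - ((Matrix.of w)ᵀ)ᵀ * A₁₁ * (Matrix.of v)ᵀ)⁻¹
            ᵥ* (((Matrix.of w)ᵀ)ᵀ * B₁) := by
          rw [vecMul_vecMul, vecMul_vecMul, Matrix.mul_assoc (C₁ * (Matrix.of v)ᵀ)]
      _ = Pi.single j 1
            ᵥ* (σ j • (((Matrix.of w)ᵀ)ᵀ * E₁₁ * (Matrix.of v)ᵀ)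
              - ((Matrix.of w)ᵀ)ᵀ * A₁₁ * (Matrix.of v)ᵀ)
            ᵥ* (σ j • (((Matrix.of w)ᵀ)ᵀ * E₁₁ * (Matrix.of v)ᵀ)
              - ((Matrix.of w)ᵀ)ᵀ * A₁₁ * (Matrix.of v)ᵀ)⁻¹
            ᵥ* (((Matrix.of w)ᵀ)ᵀ * B₁) := by rw [hrow]
      _ = Pi.single j 1 ᵥ* (((Matrix.of w)ᵀ)ᵀ * B₁) := by
          rw [vecMul_vecMul (Pi.single j 1), hRinv, vecMul_one]
      _ = w j ᵥ* B₁ := hlast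
  rw [vecMul_add, vecMul_add, hLHS, hRHS]
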